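/- The inequality 1 > (1−q)·(sin x)/x + q·(tan x)/x holds for all x in (0, π/2) if and only if q ≤ 0. -/
import Mathlib


open Real

theorem huygens_type_q_circular (q : ℝ) :
    (∀ x : ℝ, 0 < x → x < π / 2 →
      1 > (1 - q) * Real.sin x / x + q * Real.tan x / x) ↔ q ≤ 0 := by
  constructor
  · intro h
    by_contra hq
    push_neg at hq
    -- pick x near π/2 with tan x large
    have htend := Real.tendsto_tan_pi_div_two
    have hM : ∀ᶠ x in nhdsWithin (π/2) (Set.Iio (π/2)),
        (1 + 1/q) * (π/2) < Real.tan x :=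
      htend.eventually (Filter.eventually_gt_atTop _)
    have hIoo : Set.Ioo (π/4) (π/2) ∈ nhdsWithin (π/2) (Set.Iio (π/2)) := by
      apply Ioo_mem_nhdsLT_of_mem
      constructor
      · linarith [Real.pi_pos]
      · exact le_refl _
    have hne : (nhdsWithin (π/2) (Set.Iio (π/2))).NeBot := by infer_instance
    obtain ⟨x, hx1, hx2⟩ := (hM.and (Filter.eventually_of_mem hIoo fun y hy => hy)).exists
    obtain ⟨hx4, hxlt⟩ := hx2
    have hxpos : 0 < x := lt_trans (by positivity) hx4
    have hlt := h x hxpos hxlt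
    have hs0 : 0 < Real.sin x := Real.sin_pos_of_pos_of_lt_pi hxpos
      (by linarith [Real.pi_pos])
    have hs1 : Real.sin x < x := Real.sin_lt hxpos
    have hpi : 0 < π/2 := by positivity
    have htx : (1 + 1/q) < Real.tan x / x := by
      rw [lt_div_iff₀ hxpos]
      have h01 : 0 < 1 + 1/q := by positivity
      nlinarith
    have hsx1 : Real.sin x / x < 1 := (div_lt_one hxpos).2 hs1
    have hsx0 : 0 < Real.sin x / x := by positivity
    have hqt : q + 1 < q * (Real.tan x / x) := by
      have := mul_lt_mul_of_pos_left htx hq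
      have hq' : q * (1 + 1/q) = q + 1 := by field_simp
      linarith
    have heq : q * Real.tan x / x = q * (Real.tan x / x) := by ring
    have heq2 : (1 - q) * Real.sin x / x = (1 - q) * (Real.sin x / x) := by ring
    rw [heq, heq2] at hlt
    nlinarith [mul_lt_mul_of_pos_left hsx1 hq, mul_pos hq hsx0]
  · intro hq x hx hx2
    have hc : 0 < Real.cos x := Real.cos_pos_of_mem_Ioo ⟨by linarith [Real.pi_pos], hx2⟩
    have htc : Real.tan x * Real.cos x = Real.sin x := Real.tan_mul_cos (ne_of_gt hc)
    have ht0 : 0 < Real.tan x := Real.tan_pos_of_pos_of_lt_pi_div_two hx hx2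
    have hc1 : Real.cos x ≤ 1 := Real.cos_le_one x
    have hts : Real.sin x ≤ Real.tan x := by nlinarith
    have hs1 : Real.sin x < x := Real.sin_lt hx
    have hs0 : 0 < Real.sin x := Real.sin_pos_of_pos_of_lt_pi hx (by linarith [Real.pi_pos])
    have hsum : (1 - q) * Real.sin x / x + q * Real.tan x / x
        = ((1 - q) * Real.sin x + q * Real.tan x) / x := by ring
    rw [hsum, gt_iff_lt, div_lt_one hx]
    nlinarith
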